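/- Let K ⊆ X* be weak*-compact convex, B ⊆ K an (I)-generating subset, A = (a_{nk}) a positive regular matrix, and p ≥ 1. Then for every bounded sequence (x_n) in X: sup_{x*∈K} limsup_n ∑_k a_{nk}|x*(x_k)|^p = sup_{x*∈B} limsup_n ∑_k a_{nk}|x*(x_k)|^p. -/

import Mathlib

open Filter NormedSpace

/-- The weak*-closed convex hull of a set of functionals. -/
noncomputable def wstarClConvHull {X : Type*} [NormedAddCommGroup X] [NormedSpace ℝ X]
    (S : Set (StrongDual ℝ X)) : Set (StrongDual ℝ X) :=
  ⇑StrongDual.toWeakDual ⁻¹' closure (convexHull ℝ (⇑StrongDual.toWeakDual '' S))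

/-- `B` (I)-generates `K` if, whenever `B` is written as a countable union
`B = ⋃ₙ Bₙ`, `K` is the norm-closed convex hull of the union of the
weak*-closed convex hulls of the `Bₙ`. -/
def IGenerates {X : Type*} [NormedAddCommGroup X] [NormedSpace ℝ X]
    (B K : Set (StrongDual ℝ X)) : Prop :=
  ∀ Bn : ℕ → Set (StrongDual ℝ X), B = ⋃ n, Bn n →
    K = closure (convexHull ℝ (⋃ n, wstarClConvHull (Bn n)))

/-- A mean-value-type inequality for `rpow`. -/
lemma aux_rpow_mvt {p : ℝ} (hp : 1 ≤ p) {A B L : ℝ} (hA : 0 ≤ A) (hB : 0 ≤ B)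
    (hAL : A ≤ L) (hBL : B ≤ L) :
    A ^ p ≤ B ^ p + p * L ^ (p - 1) * |A - B| := by
  have hL : 0 ≤ L := le_trans hA hAL
  have hterm : 0 ≤ p * L ^ (p - 1) * |A - B| :=
    mul_nonneg (mul_nonneg (by linarith) (Real.rpow_nonneg hL _)) (abs_nonneg _)
  rcases le_total A B with h | h
  · have hle : A ^ p ≤ B ^ p := Real.rpow_le_rpow hA h (by linarith)
    linarith
  · have key : ‖A ^ p - B ^ p‖ ≤ p * L ^ (p - 1) * ‖A - B‖ := by
      refine Convex.norm_image_sub_le_of_norm_hasDerivWithin_le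
        (f := fun t : ℝ => t ^ p) (f' := fun t : ℝ => p * t ^ (p - 1))
        (fun t _ => (Real.hasDerivAt_rpow_const (Or.inr hp)).hasDerivWithinAt)
        (fun t ht => ?_) (convex_Icc 0 L) ⟨hB, hBL⟩ ⟨hA, hAL⟩
      rw [Real.norm_eq_abs, abs_mul, abs_of_nonneg (by linarith : (0:ℝ) ≤ p),
        abs_of_nonneg (Real.rpow_nonneg ht.1 _)]
      exact mul_le_mul_of_nonneg_left
        (Real.rpow_le_rpow ht.1 ht.2 (by linarith)) (by linarith)
    have h1 : A ^ p - B ^ p ≤ p * L ^ (p - 1) * |A - B| := by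
      calc A ^ p - B ^ p ≤ |A ^ p - B ^ p| := le_abs_self _
        _ ≤ p * L ^ (p - 1) * |A - B| := by
            simpa [Real.norm_eq_abs] using key
    linarith

/-- Convex-combination estimate for `|·| ^ p`. -/
lemma aux_convex_comb {p : ℝ} (hp : 1 ≤ p) {u v t s : ℝ} (ht : 0 ≤ t) (hs : 0 ≤ s)
    (hts : t + s = 1) :
    |t * u + s * v| ^ p ≤ t * |u| ^ p + s * |v| ^ p := by
  have h1 : |t * u + s * v| ≤ t * |u| + s * |v| := by
    calc |t * u + s * v| ≤ |t * u| + |s * v| := abs_add_le _ _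
      _ = t * |u| + s * |v| := by rw [abs_mul, abs_mul, abs_of_nonneg ht, abs_of_nonneg hs]
  calc |t * u + s * v| ^ p ≤ (t * |u| + s * |v|) ^ p :=
      Real.rpow_le_rpow (abs_nonneg _) h1 (by linarith)
    _ ≤ t * |u| ^ p + s * |v| ^ p := by
      have := (convexOn_rpow hp).2 (Set.mem_Ici.2 (abs_nonneg u))
        (Set.mem_Ici.2 (abs_nonneg v)) ht hs hts
      simpa [smul_eq_mul] using this

/-- Simons-type equality for strong matrix summability: if `B` (I)-generates the
weak*-compact convex set `K`, `A` is a positive regular matrix and `p ≥ 1`, then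
for every bounded sequence `(x_n)` in `X`:
`sup_{f ∈ K} limsup_n ∑_k a_{nk}|f(x_k)|^p = sup_{f ∈ B} limsup_n ∑_k a_{nk}|f(x_k)|^p`. -/
theorem simons_equality_strong_matrix {X : Type*} [NormedAddCommGroup X]
    [NormedSpace ℝ X] [CompleteSpace X]
    (K : Set (StrongDual ℝ X)) (hKcomp : IsCompact (⇑StrongDual.toWeakDual '' K))
    (hKconv : Convex ℝ K)
    (B : Set (StrongDual ℝ X)) (hBK : B ⊆ K) (hI : IGenerates B K)
    (a : ℕ → ℕ → ℝ) (hpos : ∀ n k, 0 ≤ a n k)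
    (hsummable : ∀ n, Summable fun k => a n k)
    (hbdd : ∃ C : ℝ, ∀ n, ∑' k, a n k ≤ C)
    (hrow : Tendsto (fun n => ∑' k, a n k) atTop (nhds 1))
    (hcol : ∀ k, Tendsto (fun n => a n k) atTop (nhds 0))
    (p : ℝ) (hp : 1 ≤ p)
    (x : ℕ → X) (R : ℝ) (hR : ∀ n, ‖x n‖ ≤ R) :
    (⨆ f : K, limsup (fun n => ∑' k, a n k * |(f : StrongDual ℝ X) (x k)| ^ p) atTop) =
      ⨆ f : B, limsup (fun n => ∑' k, a n k * |(f : StrongDual ℝ X) (x k)| ^ p) atTop := by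
  classical
  rcases Set.eq_empty_or_nonempty B with hBemp | hBne
  · -- degenerate case : `B = ∅` forces `K = ∅`
    have hK : K = ∅ := by
      have h := hI (fun _ => ∅) (by simp [hBemp])
      simpa [wstarClConvHull] using h
    haveI : IsEmpty (↥K) := Set.isEmpty_coe_sort.2 hK
    haveI : IsEmpty (↥B) := Set.isEmpty_coe_sort.2 hBemp
    rw [Real.iSup_of_isEmpty, Real.iSup_of_isEmpty]
  obtain ⟨C, hC⟩ := hbdd
  have hR0 : 0 ≤ R := le_trans (norm_nonneg _) (hR 0)
  have hp0 : 0 ≤ p := by linarith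
  have hC0 : 0 ≤ C := le_trans (tsum_nonneg (fun k => hpos 0 k)) (hC 0)
  -- pointwise bounds and summability
  have hterm_nonneg : ∀ (m k : ℕ) (r : ℝ), 0 ≤ a m k * |r| ^ p :=
    fun m k r => mul_nonneg (hpos m k) (Real.rpow_nonneg (abs_nonneg _) _)
  have hptwise : ∀ (g : StrongDual ℝ X) (n k : ℕ),
      a n k * |g (x k)| ^ p ≤ a n k * (‖g‖ * R) ^ p := by
    intro g n k
    refine mul_le_mul_of_nonneg_left ?_ (hpos n k)
    refine Real.rpow_le_rpow (abs_nonneg _) ?_ hp0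
    calc |g (x k)| = ‖g (x k)‖ := (Real.norm_eq_abs _).symm
      _ ≤ ‖g‖ * ‖x k‖ := g.le_opNorm _
      _ ≤ ‖g‖ * R := mul_le_mul_of_nonneg_left (hR k) (norm_nonneg g)
  have hsumf : ∀ (g : StrongDual ℝ X) (n : ℕ), Summable (fun k => a n k * |g (x k)| ^ p) := by
    intro g n
    exact Summable.of_nonneg_of_le (fun k => hterm_nonneg n k _) (fun k => hptwise g n k)
      ((hsummable n).mul_right ((‖g‖ * R) ^ p))
  have hsumf' : ∀ (φ : WeakDual ℝ X) (n : ℕ), Summable (fun k => a n k * |φ (x k)| ^ p) :=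
    fun φ n => hsumf (StrongDual.toWeakDual.symm φ) n
  have hS0 : ∀ (g : StrongDual ℝ X) (n : ℕ), 0 ≤ ∑' k, a n k * |g (x k)| ^ p :=
    fun g n => tsum_nonneg (fun k => hterm_nonneg n k _)
  have hSle : ∀ (g : StrongDual ℝ X) (n : ℕ),
      (∑' k, a n k * |g (x k)| ^ p) ≤ C * (‖g‖ * R) ^ p := by
    intro g n
    have h1 : (∑' k, a n k * |g (x k)| ^ p) ≤ ∑' k, a n k * (‖g‖ * R) ^ p :=
      Summable.tsum_le_tsum (fun k => hptwise g n k) (hsumf g n) ((hsummable n).mul_right _)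
    rw [tsum_mul_right] at h1
    exact le_trans h1 (mul_le_mul_of_nonneg_right (hC n)
      (Real.rpow_nonneg (mul_nonneg (norm_nonneg _) hR0) _))
  have hbd_le : ∀ g : StrongDual ℝ X,
      IsBoundedUnder (· ≤ ·) atTop (fun n => ∑' k, a n k * |g (x k)| ^ p) :=
    fun g => isBoundedUnder_of ⟨C * (‖g‖ * R) ^ p, fun n => hSle g n⟩
  have hbd_ge : ∀ g : StrongDual ℝ X,
      IsBoundedUnder (· ≥ ·) atTop (fun n => ∑' k, a n k * |g (x k)| ^ p) :=
    fun g => isBoundedUnder_of ⟨0, fun n => hS0 g n⟩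
  have hφle : ∀ g : StrongDual ℝ X,
      limsup (fun n => ∑' k, a n k * |g (x k)| ^ p) atTop ≤ C * (‖g‖ * R) ^ p :=
    fun g => limsup_le_of_le ((hbd_ge g).isCoboundedUnder_le)
      (Eventually.of_forall (fun n => hSle g n))
  -- a uniform bound on norms of elements of `K`
  have hpt : ∀ y : X, ∃ c : ℝ, ∀ i : ↥K, ‖(i : StrongDual ℝ X) y‖ ≤ c := by
    intro y
    have hcomp : IsCompact ((fun φ : WeakDual ℝ X => φ y) '' (⇑StrongDual.toWeakDual '' K)) :=
      hKcomp.image (WeakDual.eval_continuous y)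
    obtain ⟨r, hr⟩ := hcomp.isBounded.subset_closedBall 0
    refine ⟨r, fun i => ?_⟩
    have hmem : (i : StrongDual ℝ X) y ∈
        (fun φ : WeakDual ℝ X => φ y) '' (⇑StrongDual.toWeakDual '' K) :=
      Set.mem_image_of_mem _ (Set.mem_image_of_mem _ i.2)
    simpa [Real.norm_eq_abs, Real.dist_eq] using hr hmem
  obtain ⟨D, hD⟩ := banach_steinhaus (g := fun i : ↥K => (i : StrongDual ℝ X)) hpt
  have hKne : K.Nonempty := ⟨hBne.choose, hBK hBne.choose_spec⟩
  have hD0 : 0 ≤ D := le_trans (norm_nonneg _) (hD ⟨hKne.choose, hKne.choose_spec⟩)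
  have hDbound : ∀ g ∈ K, ‖g‖ ≤ D := fun g hg => hD ⟨g, hg⟩
  have hval_bound : ∀ g : StrongDual ℝ X, g ∈ K →
      limsup (fun n => ∑' k, a n k * |g (x k)| ^ p) atTop ≤ C * (D * R) ^ p := by
    intro g hg
    refine le_trans (hφle g) (mul_le_mul_of_nonneg_left ?_ hC0)
    exact Real.rpow_le_rpow (mul_nonneg (norm_nonneg _) hR0)
      (mul_le_mul_of_nonneg_right (hDbound g hg) hR0) hp0
  have hbddK : BddAbove (Set.range
      fun f : ↥K => limsup (fun n => ∑' k, a n k * |(f : StrongDual ℝ X) (x k)| ^ p) atTop) := by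
    refine ⟨C * (D * R) ^ p, ?_⟩
    rintro _ ⟨f, rfl⟩
    exact hval_bound f f.2
  have hbddB : BddAbove (Set.range
      fun f : ↥B => limsup (fun n => ∑' k, a n k * |(f : StrongDual ℝ X) (x k)| ^ p) atTop) := by
    refine ⟨C * (D * R) ^ p, ?_⟩
    rintro _ ⟨f, rfl⟩
    exact hval_bound f (hBK f.2)
  set M := ⨆ f : ↥B, limsup (fun n => ∑' k, a n k * |(f : StrongDual ℝ X) (x k)| ^ p) atTop with hM
  haveI : Nonempty ↥B := hBne.to_subtype
  haveI : Nonempty ↥K := hKne.to_subtype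
  have h1 : M ≤ ⨆ f : ↥K, limsup (fun n => ∑' k, a n k * |(f : StrongDual ℝ X) (x k)| ^ p) atTop := by
    refine ciSup_le (fun f => ?_)
    exact le_ciSup hbddK (⟨(f : StrongDual ℝ X), hBK f.2⟩ : ↥K)
  -- convex-combination estimate for the sums
  have hScomb : ∀ (m : ℕ) (u v : ℕ → ℝ) (t s : ℝ), 0 ≤ t → 0 ≤ s → t + s = 1 →
      Summable (fun k => a m k * |u k| ^ p) → Summable (fun k => a m k * |v k| ^ p) →
      (∑' k, a m k * |t * u k + s * v k| ^ p) ≤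
        t * (∑' k, a m k * |u k| ^ p) + s * (∑' k, a m k * |v k| ^ p) := by
    intro m u v t s ht hs hts hu hv
    have key : ∀ k, a m k * |t * u k + s * v k| ^ p ≤
        t * (a m k * |u k| ^ p) + s * (a m k * |v k| ^ p) := by
      intro k
      calc a m k * |t * u k + s * v k| ^ p
          ≤ a m k * (t * |u k| ^ p + s * |v k| ^ p) :=
            mul_le_mul_of_nonneg_left (aux_convex_comb hp ht hs hts) (hpos m k)
        _ = t * (a m k * |u k| ^ p) + s * (a m k * |v k| ^ p) := by ring
    have hsum_rhs : Summable (fun k => t * (a m k * |u k| ^ p) + s * (a m k * |v k| ^ p)) :=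
      (hu.mul_left t).add (hv.mul_left s)
    have hsum_lhs : Summable (fun k => a m k * |t * u k + s * v k| ^ p) :=
      Summable.of_nonneg_of_le (fun k => hterm_nonneg m k _) key hsum_rhs
    calc (∑' k, a m k * |t * u k + s * v k| ^ p)
        ≤ ∑' k, (t * (a m k * |u k| ^ p) + s * (a m k * |v k| ^ p)) :=
          Summable.tsum_le_tsum key hsum_lhs hsum_rhs
      _ = t * (∑' k, a m k * |u k| ^ p) + s * (∑' k, a m k * |v k| ^ p) := by
          rw [Summable.tsum_add (hu.mul_left t) (hv.mul_left s), tsum_mul_left, tsum_mul_left]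
  -- main inequality: for every `g ∈ K` and `ε > 0`, `limsup ... ≤ M + ε`
  have h2 : ∀ g : StrongDual ℝ X, g ∈ K → ∀ ε : ℝ, 0 < ε →
      limsup (fun n => ∑' k, a n k * |g (x k)| ^ p) atTop ≤ M + ε := by
    intro g hgK ε hε
    set Bn : ℕ → Set (StrongDual ℝ X) :=
      fun N => {f : StrongDual ℝ X | f ∈ B ∧ ∀ m, N ≤ m → (∑' k, a m k * |f (x k)| ^ p) ≤ M + ε}
      with hBnDef
    have hBn : B = ⋃ N, Bn N := by
      ext f
      simp only [hBnDef, Set.mem_iUnion, Set.mem_setOf_eq]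
      constructor
      · intro hf
        have hfM : limsup (fun n => ∑' k, a n k * |f (x k)| ^ p) atTop ≤ M :=
          le_ciSup hbddB (⟨f, hf⟩ : ↥B)
        have hev : ∀ᶠ m in atTop, (∑' k, a m k * |f (x k)| ^ p) < M + ε :=
          eventually_lt_of_limsup_lt (lt_of_le_of_lt hfM (by linarith)) (hbd_le f)
        obtain ⟨N, hN⟩ := eventually_atTop.1 hev
        exact ⟨N, hf, fun m hm => (hN m hm).le⟩
      · rintro ⟨N, hf, -⟩
        exact hf
    have hKeq := hI Bn hBn
    -- the sublevel sets in the weak* dual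
    have hVclosed : ∀ m : ℕ,
        IsClosed {φ : WeakDual ℝ X | (∑' k, a m k * |φ (x k)| ^ p) ≤ M + ε} := by
      intro m
      have heq : {φ : WeakDual ℝ X | (∑' k, a m k * |φ (x k)| ^ p) ≤ M + ε}
          = ⋂ (F : Finset ℕ),
            {φ : WeakDual ℝ X | (∑ k ∈ F, a m k * |φ (x k)| ^ p) ≤ M + ε} := by
        ext φ
        simp only [Set.mem_setOf_eq, Set.mem_iInter]
        constructor
        · intro h F
          exact le_trans (Summable.sum_le_tsum F (fun k _ => hterm_nonneg m k _) (hsumf' φ m)) h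
        · intro h
          exact Summable.tsum_le_of_sum_le (hsumf' φ m) h
      rw [heq]
      refine isClosed_iInter (fun F => ?_)
      have hcont : Continuous fun φ : WeakDual ℝ X => ∑ k ∈ F, a m k * |φ (x k)| ^ p := by
        refine continuous_finset_sum F (fun k _ => ?_)
        exact continuous_const.mul (((WeakDual.eval_continuous (x k)).abs).rpow_const
          (fun φ => Or.inr hp0))
      exact isClosed_le hcont continuous_const
    have hVconvex : ∀ m : ℕ,
        Convex ℝ {φ : WeakDual ℝ X | (∑' k, a m k * |φ (x k)| ^ p) ≤ M + ε} := by
      intro m φ₁ h₁ φ₂ h₂ t s ht hs hts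
      simp only [Set.mem_setOf_eq] at h₁ h₂ ⊢
      calc (∑' k, a m k * |(t • φ₁ + s • φ₂) (x k)| ^ p)
          = ∑' k, a m k * |t * φ₁ (x k) + s * φ₂ (x k)| ^ p := rfl
        _ ≤ t * (∑' k, a m k * |φ₁ (x k)| ^ p) + s * (∑' k, a m k * |φ₂ (x k)| ^ p) :=
            hScomb m _ _ t s ht hs hts (hsumf' φ₁ m) (hsumf' φ₂ m)
        _ ≤ t * (M + ε) + s * (M + ε) :=
            add_le_add (mul_le_mul_of_nonneg_left h₁ ht) (mul_le_mul_of_nonneg_left h₂ hs)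
        _ = M + ε := by rw [← add_mul, hts, one_mul]
    -- membership in the weak* hulls gives the sublevel bound
    have hkey : ∀ N : ℕ, ∀ g' ∈ wstarClConvHull (Bn N), ∀ m, N ≤ m →
        (∑' k, a m k * |g' (x k)| ^ p) ≤ M + ε := by
      intro N g' hg' m hm
      have hsub : ⇑StrongDual.toWeakDual '' (Bn N) ⊆
          {φ : WeakDual ℝ X | (∑' k, a m k * |φ (x k)| ^ p) ≤ M + ε} := by
        rintro _ ⟨f, hf, rfl⟩
        exact hf.2 m hm
      have hcl : closure (convexHull ℝ (⇑StrongDual.toWeakDual '' (Bn N))) ⊆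
          {φ : WeakDual ℝ X | (∑' k, a m k * |φ (x k)| ^ p) ≤ M + ε} :=
        closure_minimal (convexHull_min hsub (hVconvex m)) (hVclosed m)
      exact hcl hg'
    -- the norm-side sublevel sets
    have hUconv : ∀ N : ℕ, Convex ℝ
        {g' : StrongDual ℝ X | ∀ m, N ≤ m → (∑' k, a m k * |g' (x k)| ^ p) ≤ M + ε} := by
      intro N g₁ h₁ g₂ h₂ t s ht hs hts
      intro m hm
      calc (∑' k, a m k * |(t • g₁ + s • g₂) (x k)| ^ p)
          = ∑' k, a m k * |t * g₁ (x k) + s * g₂ (x k)| ^ p := rfl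
        _ ≤ t * (∑' k, a m k * |g₁ (x k)| ^ p) + s * (∑' k, a m k * |g₂ (x k)| ^ p) :=
            hScomb m _ _ t s ht hs hts (hsumf g₁ m) (hsumf g₂ m)
        _ ≤ t * (M + ε) + s * (M + ε) :=
            add_le_add (mul_le_mul_of_nonneg_left (h₁ m hm) ht)
              (mul_le_mul_of_nonneg_left (h₂ m hm) hs)
        _ = M + ε := by rw [← add_mul, hts, one_mul]
    have hUmono : Monotone (fun N : ℕ =>
        {g' : StrongDual ℝ X | ∀ m, N ≤ m → (∑' k, a m k * |g' (x k)| ^ p) ≤ M + ε}) :=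
      fun N N' hNN' g' hg' m hm => hg' m (le_trans hNN' hm)
    have hUnion_conv : Convex ℝ (⋃ N : ℕ,
        {g' : StrongDual ℝ X | ∀ m, N ≤ m → (∑' k, a m k * |g' (x k)| ^ p) ≤ M + ε}) :=
      (hUmono.directed_le).convex_iUnion (fun N => hUconv N)
    have hconv_sub : convexHull ℝ (⋃ N, wstarClConvHull (Bn N)) ⊆ ⋃ N : ℕ,
        {g' : StrongDual ℝ X | ∀ m, N ≤ m → (∑' k, a m k * |g' (x k)| ^ p) ≤ M + ε} := by
      refine convexHull_min (Set.iUnion_subset (fun N g' hg' => ?_)) hUnion_conv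
      exact Set.mem_iUnion.2 ⟨N, fun m hm => hkey N g' hg' m hm⟩
    -- pass to the norm closure using a Lipschitz-type estimate
    have hg : g ∈ closure (convexHull ℝ (⋃ n, wstarClConvHull (Bn n))) := hKeq ▸ hgK
    set L := (D + 1) * R with hLdef
    have hL0 : 0 ≤ L := mul_nonneg (by linarith) hR0
    set c := C * (p * L ^ (p - 1) * R) with hcdef
    have hc0 : 0 ≤ c := mul_nonneg hC0 (mul_nonneg
      (mul_nonneg (by linarith) (Real.rpow_nonneg hL0 _)) hR0)
    have hstep : ∀ δ : ℝ, 0 < δ → δ ≤ 1 →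
        limsup (fun n => ∑' k, a n k * |g (x k)| ^ p) atTop ≤ M + ε + c * δ := by
      intro δ hδ hδ1
      obtain ⟨g', hg'mem, hdist⟩ := Metric.mem_closure_iff.1 hg δ hδ
      obtain ⟨N, hN⟩ := Set.mem_iUnion.1 (hconv_sub hg'mem)
      have hgd : ‖g‖ ≤ D := hDbound g hgK
      have hdiff : ‖g - g'‖ < δ := by
        rw [← dist_eq_norm]
        exact hdist
      have hg'D : ‖g'‖ ≤ D + 1 := by
        have h1 : ‖g'‖ ≤ ‖g‖ + ‖g' - g‖ := norm_le_insert' g' g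
        have h2 : ‖g' - g‖ = ‖g - g'‖ := norm_sub_rev g' g
        linarith
      have hgb : ∀ k, |g (x k)| ≤ L := by
        intro k
        calc |g (x k)| = ‖g (x k)‖ := (Real.norm_eq_abs _).symm
          _ ≤ ‖g‖ * ‖x k‖ := g.le_opNorm _
          _ ≤ (D + 1) * R := mul_le_mul (by linarith) (hR k) (norm_nonneg _) (by linarith)
      have hg'b : ∀ k, |g' (x k)| ≤ L := by
        intro k
        calc |g' (x k)| = ‖g' (x k)‖ := (Real.norm_eq_abs _).symm
          _ ≤ ‖g'‖ * ‖x k‖ := g'.le_opNorm _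
          _ ≤ (D + 1) * R := mul_le_mul hg'D (hR k) (norm_nonneg _) (by linarith)
      have hpt2 : ∀ m k, a m k * |g (x k)| ^ p ≤
          a m k * |g' (x k)| ^ p + a m k * (p * L ^ (p - 1) * (δ * R)) := by
        intro m k
        have hmvt := aux_rpow_mvt hp (abs_nonneg (g (x k))) (abs_nonneg (g' (x k)))
          (hgb k) (hg'b k)
        have habs : abs (|g (x k)| - |g' (x k)|) ≤ δ * R := by
          refine le_trans (abs_abs_sub_abs_le_abs_sub _ _) ?_
          have h1 : |g (x k) - g' (x k)| = ‖(g - g') (x k)‖ := by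
            simp [Real.norm_eq_abs]
          rw [h1]
          calc ‖(g - g') (x k)‖ ≤ ‖g - g'‖ * ‖x k‖ := (g - g').le_opNorm _
            _ ≤ δ * R := mul_le_mul hdiff.le (hR k) (norm_nonneg _) hδ.le
        have h3 : p * L ^ (p - 1) * abs (|g (x k)| - |g' (x k)|) ≤ p * L ^ (p - 1) * (δ * R) :=
          mul_le_mul_of_nonneg_left habs
            (mul_nonneg (by linarith) (Real.rpow_nonneg hL0 _))
        have h4 : |g (x k)| ^ p ≤ |g' (x k)| ^ p + p * L ^ (p - 1) * (δ * R) := by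
          linarith
        calc a m k * |g (x k)| ^ p
            ≤ a m k * (|g' (x k)| ^ p + p * L ^ (p - 1) * (δ * R)) :=
              mul_le_mul_of_nonneg_left h4 (hpos m k)
          _ = a m k * |g' (x k)| ^ p + a m k * (p * L ^ (p - 1) * (δ * R)) := by ring
      have hsum_est : ∀ m, (∑' k, a m k * |g (x k)| ^ p) ≤
          (∑' k, a m k * |g' (x k)| ^ p) + c * δ := by
        intro m
        have hsum2 : Summable (fun k => a m k * (p * L ^ (p - 1) * (δ * R))) :=
          (hsummable m).mul_right _
        have h1 : (∑' k, a m k * |g (x k)| ^ p) ≤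
            ∑' k, (a m k * |g' (x k)| ^ p + a m k * (p * L ^ (p - 1) * (δ * R))) :=
          Summable.tsum_le_tsum (fun k => hpt2 m k) (hsumf g m) ((hsumf g' m).add hsum2)
        rw [Summable.tsum_add (hsumf g' m) hsum2, tsum_mul_right] at h1
        refine le_trans h1 (add_le_add_right ?_ _)
        calc (∑' k, a m k) * (p * L ^ (p - 1) * (δ * R))
            ≤ C * (p * L ^ (p - 1) * (δ * R)) := by
              refine mul_le_mul_of_nonneg_right (hC m) ?_
              exact mul_nonneg (mul_nonneg (by linarith) (Real.rpow_nonneg hL0 _))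
                (mul_nonneg hδ.le hR0)
          _ = c * δ := by rw [hcdef]; ring
      have hev : ∀ᶠ m in atTop, (∑' k, a m k * |g (x k)| ^ p) ≤ M + ε + c * δ := by
        filter_upwards [eventually_ge_atTop N] with m hm
        have := hN m hm
        linarith [hsum_est m]
      exact limsup_le_of_le ((hbd_ge g).isCoboundedUnder_le) hev
    -- let `δ → 0`
    refine le_of_forall_pos_le_add (fun η hη => ?_)
    have hcpos : (0:ℝ) < c + 1 := by linarith
    set δ := min 1 (η / (c + 1)) with hδdef
    have hδpos : 0 < δ := lt_min one_pos (div_pos hη hcpos)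
    have hδ1 : δ ≤ 1 := min_le_left _ _
    have hcδ : c * δ ≤ η := by
      have h1 : c * δ ≤ c * (η / (c + 1)) :=
        mul_le_mul_of_nonneg_left (min_le_right _ _) hc0
      have h2 : c * (η / (c + 1)) ≤ η := by
        rw [mul_div_assoc']
        rw [div_le_iff₀ hcpos]
        nlinarith
      linarith
    have := hstep δ hδpos hδ1
    linarith
  -- conclude
  have h2' : ∀ g : StrongDual ℝ X, g ∈ K →
      limsup (fun n => ∑' k, a n k * |g (x k)| ^ p) atTop ≤ M := by
    intro g hg
    exact le_of_forall_pos_le_add (fun ε hε => h2 g hg ε hε)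
  have hsupK : (⨆ f : ↥K, limsup (fun n => ∑' k, a n k * |(f : StrongDual ℝ X) (x k)| ^ p) atTop)
      ≤ M :=
    ciSup_le (fun f => h2' f f.2)
  exact le_antisymm hsupK h1
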